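/- For every ε ≥ 0 and every δ with 0 ≤ δ < 1, there exist a finite token alphabet X containing an end token ⊥, a finite data universe 𝒮, and a credit-attributing next-token predictor M̃ such that M̃ is (0,0)-CCA but its crediting rollout G̃ is not (ε,δ)-CCA. -/

import Mathlib

open scoped ENNReal Classical

noncomputable section

namespace CCA

variable {α X D Y : Type*}

/-- Conditional probability of an event `E` given event `B`, for a set function `P`. -/
def prCond (P : Set α → ℝ≥0∞) (B : Set α) : Set α → ℝ≥0∞ := fun E => P (E ∩ B) / P B

/-- `(ε,δ)`-closeness of two set functions, as in differential privacy. -/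
def Close (ε δ : ℝ) (P Q : Set α → ℝ≥0∞) : Prop :=
  ∀ E : Set α,
    P E ≤ ENNReal.ofReal (Real.exp ε) * Q E + ENNReal.ofReal δ ∧
    Q E ≤ ENNReal.ofReal (Real.exp ε) * P E + ENNReal.ofReal δ

/-- `(ε,δ)`-counterfactual credit attribution for a kernel `K` mapping a dataset `S` and a
prompt `x` to a (sub)probability set function over (output, credit set) pairs: for every
prompt, dataset and `s ∈ S`, either `s` is credited with probability `1`, or the conditional
distribution given `s` not credited is `(ε,δ)`-close to the counterfactual on `S \ {s}`. -/
def IsCCA (ε δ : ℝ) (K : Set D → List X → Set (Y × Set D) → ℝ≥0∞) : Prop :=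
  ∀ (S : Set D) (x : List X) (s : D), s ∈ S →
    K S x {q | s ∈ q.2} = 1 ∨
    Close ε δ (prCond (K S x) {q | s ∉ q.2}) (K (S \ {s}) x)

/-- The event kernel associated with a PMF-valued crediting algorithm. -/
def pmfKernel (M : Set D → List X → PMF (Y × Set D)) :
    Set D → List X → Set (Y × Set D) → ℝ≥0∞ :=
  fun S x E => (M S x).toOuterMeasure E

/-- Probability that the crediting rollout of `M` on current prompt `x` produces exactly the
trace `w` of (token, credit set) pairs. -/
def traceProb (M : Set D → List X → PMF (X × Set D)) (S : Set D) :
    List X → List (X × Set D) → ℝ≥0∞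
  | _, [] => 1
  | x, q :: w => M S x q * traceProb M S (x ++ [q.1]) w

/-- A terminal trace: the last generated token is `bot` and no earlier token is `bot`. -/
def IsTerminal (bot : X) (w : List (X × Set D)) : Prop :=
  (w.map Prod.fst).getLast? = some bot ∧ ∀ y ∈ (w.map Prod.fst).dropLast, y ≠ bot

/-- The union of the credit sets appearing along a trace. -/
def creditOf (w : List (X × Set D)) : Set D := w.foldr (fun q acc => q.2 ∪ acc) ∅

/-- Probability that the crediting rollout of `M` on `(S, x0)` outputs the
(generated string, credit set) pair `o`. -/
def rolloutProb (bot : X) (M : Set D → List X → PMF (X × Set D)) (S : Set D)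
    (x0 : List X) (o : List X × Set D) : ℝ≥0∞ :=
  ∑' w : {w : List (X × Set D) //
      IsTerminal bot w ∧ x0 ++ w.map Prod.fst = o.1 ∧ creditOf w = o.2},
    traceProb M S x0 w.1

/-- Event kernel of the crediting rollout of `M`. -/
def rolloutK (bot : X) (M : Set D → List X → PMF (X × Set D)) :
    Set D → List X → Set (List X × Set D) → ℝ≥0∞ :=
  fun S x0 E => ∑' o : E, rolloutProb bot M S x0 ↑o


section Counterexample

lemma pmfKernel_eq {X D Y : Type*} (M : Set D → List X → PMF (Y × Set D)) (S : Set D)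
    (x : List X) : pmfKernel M S x = fun E => (M S x).toOuterMeasure E := rfl

lemma close_self {D Y : Type*} (s : D) (P : PMF (Y × Set D)) (hs : ∀ a, P a ≠ 0 → s ∉ a.2) :
    Close 0 0 (prCond (fun E => P.toOuterMeasure E) {q | s ∉ q.2})
      (fun E => P.toOuterMeasure E) := by
  have hind : ∀ E : Set (Y × Set D),
      P.toOuterMeasure (E ∩ {q | s ∉ q.2}) = P.toOuterMeasure E := by
    intro E
    rw [PMF.toOuterMeasure_apply, PMF.toOuterMeasure_apply]
    refine tsum_congr fun a => ?_
    simp only [Set.indicator_apply]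
    split_ifs with h1 h2 h2
    · rfl
    · exact absurd h1.1 h2
    · by_contra hne
      exact h1 ⟨h2, hs a fun h0 => hne (h0 ▸ rfl)⟩
    · rfl
  have hB : P.toOuterMeasure {q | s ∉ q.2} = 1 := by
    rw [PMF.toOuterMeasure_apply]
    rw [show ∑' a, ({q : Y × Set D | s ∉ q.2}).indicator P a = ∑' a, P a from
      tsum_congr fun a => by
        by_cases h : a ∈ {q : Y × Set D | s ∉ q.2}
        · simp [Set.indicator_apply, h]
        · simp only [Set.indicator_apply, if_neg h]
          by_contra hne
          exact h (hs a fun h0 => hne h0.symm)]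
    exact P.tsum_coe
  intro E
  simp only [prCond, hind, hB, div_one, Real.exp_zero, ENNReal.ofReal_one, one_mul,
    ENNReal.ofReal_zero, add_zero, le_refl, and_self]

variable (p : ℝ≥0∞) (hp : p ≤ 1)

/-- The "mixing" step distribution: token `false` w.p. `p`, token `true` w.p. `1-p`,
always empty credit. -/
def mixP : PMF (Bool × Set Unit) := (PMF.bernoulli p.toNNReal (by have h := ENNReal.toNNReal_mono ENNReal.one_ne_top hp; rw [ENNReal.toNNReal_one] at h; exact h)).map (fun b => (!b, (∅ : Set Unit)))

lemma mixP_false : mixP p hp (false, (∅ : Set Unit)) = p := by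
  simp [mixP, PMF.map_apply, tsum_fintype, PMF.bernoulli_apply, Prod.ext_iff,
    ENNReal.coe_toNNReal (ne_top_of_le_ne_top ENNReal.one_ne_top hp)]

lemma mixP_true : mixP p hp (true, (∅ : Set Unit)) = 1 - p := by
  simp [mixP, PMF.map_apply, tsum_fintype, PMF.bernoulli_apply, Prod.ext_iff,
    ENNReal.coe_toNNReal (ne_top_of_le_ne_top ENNReal.one_ne_top hp)]

lemma mixP_support (q : Bool × Set Unit) (h : mixP p hp q ≠ 0) :
    q = (false, (∅ : Set Unit)) ∨ q = (true, (∅ : Set Unit)) := by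
  by_contra hc
  push_neg at hc
  refine h ?_
  simp only [mixP, PMF.map_apply, tsum_fintype]
  rw [Finset.sum_eq_zero]
  intro b _
  rcases b <;> simp_all

/-- The counterexample predictor. -/
def myM : Set Unit → List Bool → PMF (Bool × Set Unit) := fun S x =>
  if true ∈ x then PMF.pure (true, ∅)
  else if x.getLast? = some false then PMF.pure (true, S)
  else mixP p hp

lemma myM_nil (S : Set Unit) : myM p hp S [] = mixP p hp := by simp [myM]

lemma myM_fls (S : Set Unit) : myM p hp S [false] = PMF.pure (true, S) := by simp [myM]

/-- The two positive-probability terminal traces from the empty prompt. -/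
def w1 (S : Set Unit) : List (Bool × Set Unit) := [(false, ∅), (true, S)]

def w2 : List (Bool × Set Unit) := [(true, ∅)]

lemma tp_w1 (S : Set Unit) : traceProb (myM p hp) S [] (w1 S) = p := by
  simp [w1, traceProb, myM_nil, myM_fls, mixP_false, PMF.pure_apply]

lemma isTerminal_w1 (S : Set Unit) : IsTerminal true (w1 S) := by
  constructor <;> simp [w1]

lemma isTerminal_w2 : IsTerminal (true : Bool) (w2 : List (Bool × Set Unit)) := by
  constructor <;> simp [w2]

lemma creditOf_w1 (S : Set Unit) : creditOf (w1 S) = S := by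
  simp [w1, creditOf]

lemma creditOf_w2 : creditOf (w2 : List (Bool × Set Unit)) = ∅ := by
  simp [w2, creditOf]

lemma tp_zero (S : Set Unit) (w : List (Bool × Set Unit)) (ht : IsTerminal true w)
    (h1 : w ≠ w1 S) (h2 : w ≠ w2) : traceProb (myM p hp) S [] w = 0 := by
  obtain _ | ⟨q, rest⟩ := w
  · exact absurd ht.1 (by simp)
  by_cases hq0 : myM p hp S [] q = 0
  · simp [traceProb, hq0]
  rw [myM_nil] at hq0
  rcases mixP_support p hp q hq0 with rfl | rfl
  · -- q = (false, ∅)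
    obtain _ | ⟨q2, rest2⟩ := rest
    · exact absurd ht.1 (by simp)
    by_cases hq2 : q2 = (true, S)
    · subst hq2
      obtain _ | ⟨q3, rest3⟩ := rest2
      · exact absurd rfl h1
      · exact absurd (ht.2 true (by simp)) (by simp)
    · have h0 : myM p hp S [false] q2 = 0 := by
        rw [myM_fls]; simp [PMF.pure_apply, hq2]
      simp only [traceProb, List.nil_append, mul_eq_zero]
      exact Or.inr (Or.inl h0)
  · -- q = (true, ∅)
    obtain _ | ⟨q2, rest2⟩ := rest
    · exact absurd rfl h2
    · exact absurd (ht.2 true (by simp)) (by simp)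

lemma rolloutProb_o1 (S : Set Unit) :
    rolloutProb true (myM p hp) S [] ([false, true], S) = p := by
  rw [rolloutProb]
  rw [tsum_eq_single (⟨w1 S, isTerminal_w1 S, by simp [w1], creditOf_w1 S⟩ :
      {w : List (Bool × Set Unit) // IsTerminal true w ∧
        [] ++ w.map Prod.fst = ([false, true], S).1 ∧ creditOf w = ([false, true], S).2})]
  · exact tp_w1 p hp S
  · rintro ⟨w, ht, hx, hc⟩ hne
    refine tp_zero p hp S w ht (fun h => hne (Subtype.ext h)) (fun h => ?_)
    subst h
    simp [w2] at hx

lemma rolloutProb_zero (S : Set Unit) (o : List Bool × Set Unit)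
    (h1 : o ≠ ([false, true], S)) (h2 : o ≠ ([true], (∅ : Set Unit))) :
    rolloutProb true (myM p hp) S [] o = 0 := by
  rw [rolloutProb, ENNReal.tsum_eq_zero]
  rintro ⟨w, ht, hx, hc⟩
  refine tp_zero p hp S w ht (fun h => ?_) (fun h => ?_)
  · subst h
    refine h1 ?_
    refine Prod.ext ?_ ?_
    · rw [← hx]; simp [w1]
    · rw [← hc]; exact creditOf_w1 S
  · subst h
    refine h2 ?_
    refine Prod.ext ?_ ?_
    · rw [← hx]; simp [w2]
    · rw [← hc]; exact creditOf_w2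

end Counterexample

/-- For every `ε ≥ 0` and `0 ≤ δ < 1` there are a finite token alphabet with an end token, a
finite data universe, and a crediting next-token predictor that is `(0,0)`-CCA whose
crediting rollout is not `(ε,δ)`-CCA. -/
theorem stmt0 (ε δ : ℝ) (hε : 0 ≤ ε) (hδ0 : 0 ≤ δ) (hδ1 : δ < 1) :
    ∃ (X : Type) (_ : Fintype X) (bot : X) (D : Type) (_ : Fintype D)
      (M : Set D → List X → PMF (X × Set D)),
      (∀ (S : Set D) (x : List X), bot ∈ x →
        (M S x).toOuterMeasure {q : X × Set D | q.1 = bot} = 1) ∧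
      (∀ (S : Set D) (x : List X) (q : X × Set D), M S x q ≠ 0 → q.2 ⊆ S) ∧
      IsCCA 0 0 (pmfKernel M) ∧
      ¬ IsCCA ε δ (rolloutK bot M) := by
  set p : ℝ≥0∞ := ENNReal.ofReal ((1 + δ) / 2) with hpdef
  have hp : p ≤ 1 := by
    rw [hpdef]; exact ENNReal.ofReal_le_one.mpr (by linarith)
  refine ⟨Bool, inferInstance, true, Unit, inferInstance, myM p hp, ?_, ?_, ?_, ?_⟩
  · -- end-token condition
    intro S x hx
    rw [show myM p hp S x = PMF.pure (true, ∅) from by simp [myM, hx],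
      PMF.toOuterMeasure_pure_apply]
    exact if_pos rfl
  · -- credit sets are subsets of the dataset
    intro S x q h
    by_cases hx : true ∈ x
    · have hq : q = (true, ∅) := by
        by_contra hne
        exact h (by simp [myM, hx, PMF.pure_apply, hne])
      simp [hq]
    · by_cases hl : x.getLast? = some false
      · have hq : q = (true, S) := by
          by_contra hne
          exact h (by simp [myM, hx, hl, PMF.pure_apply, hne])
        simp [hq]
      · rcases mixP_support p hp q (by simpa [myM, hx, hl] using h) with rfl | rfl <;> simp
  · -- the predictor is (0,0)-CCA
    intro S x s hs
    by_cases hx : true ∈ x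
    · right
      have hM : ∀ T : Set Unit, myM p hp T x = PMF.pure (true, ∅) := fun T => by
        simp [myM, hx]
      rw [pmfKernel_eq, pmfKernel_eq]
      simp only [hM]
      refine close_self s _ (fun a ha => ?_)
      have : a = (true, ∅) := by
        by_contra hne; exact ha (by simp [PMF.pure_apply, hne])
      simp [this]
    · by_cases hl : x.getLast? = some false
      · left
        simp only [pmfKernel]
        rw [show myM p hp S x = PMF.pure (true, S) by simp [myM, hx, hl],
          PMF.toOuterMeasure_pure_apply]
        simp [hs]
      · right
        have hM : ∀ T : Set Unit, myM p hp T x = mixP p hp := fun T => by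
          simp [myM, hx, hl]
        rw [pmfKernel_eq, pmfKernel_eq]
        simp only [hM]
        refine close_self s _ (fun a ha => ?_)
        rcases mixP_support p hp a ha with rfl | rfl <;> simp
  · -- the rollout is not (ε,δ)-CCA
    intro hcca
    have hδp : ENNReal.ofReal δ < p := by
      rw [hpdef]
      exact (ENNReal.ofReal_lt_ofReal_iff (by linarith)).mpr (by linarith)
    have hUnit : (Set.univ \ {()} : Set Unit) = ∅ := by
      ext u; simp
    rcases hcca Set.univ [] () (Set.mem_univ ()) with h1 | h2
    · have hPevent : rolloutK true (myM p hp) Set.univ []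
          {q : List Bool × Set Unit | () ∈ q.2} = p := by
        rw [rolloutK]
        rw [tsum_eq_single (⟨([false, true], Set.univ), Set.mem_univ ()⟩ :
          {q : List Bool × Set Unit | () ∈ q.2})]
        · exact rolloutProb_o1 p hp Set.univ
        · rintro ⟨o, ho⟩ hne
          refine rolloutProb_zero p hp Set.univ o (fun h => hne (Subtype.ext h))
            (fun h => ?_)
          subst h
          simp only [Set.mem_setOf_eq] at ho
          exact ho
      rw [hPevent] at h1
      exact absurd h1 (ENNReal.ofReal_lt_one.mpr (by linarith)).ne
    · rw [hUnit] at h2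
      set E : Set (List Bool × Set Unit) := {o | o.1 = [false, true]} with hE
      have hz : rolloutK true (myM p hp) Set.univ [] (E ∩ {q | () ∉ q.2}) = 0 := by
        rw [rolloutK, ENNReal.tsum_eq_zero]
        rintro ⟨o, hoE, hoB⟩
        refine rolloutProb_zero p hp Set.univ o (fun h => ?_) (fun h => ?_)
        · subst h; exact hoB (Set.mem_univ ())
        · subst h; simp [hE] at hoE
      have hcond : prCond (rolloutK true (myM p hp) Set.univ []) {q | () ∉ q.2} E = 0 := by
        simp only [prCond, hz, ENNReal.zero_div]
      have hQ : p ≤ rolloutK true (myM p hp) ∅ [] E := by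
        rw [rolloutK]
        calc p = rolloutProb true (myM p hp) ∅ [] ([false, true], ∅) :=
              (rolloutProb_o1 p hp ∅).symm
          _ ≤ _ := ENNReal.le_tsum (⟨([false, true], ∅), by simp [hE]⟩ : ↥E)
      have hle := (h2 E).2
      rw [hcond, mul_zero, zero_add] at hle
      exact absurd (hQ.trans hle) hδp.not_ge


end CCA
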